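/- For all n ≥ 1, ∑_{w ∈ B_n} sgn_B(w) t^{des_B(w)} = (1-t)^{n+1} ∑_{k ≥ 0} t^k = (1-t)^n as polynomials (equivalently, ∑_{w ∈ B_n} sgn_B(w) t^{des_B(w)} = (1-t)^n). -/

import Mathlib

open scoped Classical

/-- An element of the hyperoctahedral group `B_n`, encoded as an underlying
permutation `u ∈ S_n` together with the set of negated positions (`true` = negated). -/
abbrev BPerm (n : ℕ) := Equiv.Perm (Fin n) × (Fin n → Bool)

/-- The one-line value `w(i)` (as an integer, positions and values `1,…,n`)
of the signed permutation, with the convention `w(0) = 0`. -/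
noncomputable def bval {n : ℕ} (p : BPerm n) (i : ℕ) : ℤ :=
  if h : 1 ≤ i ∧ i ≤ n then
    (if p.2 ⟨i - 1, by omega⟩ then -(((p.1 ⟨i - 1, by omega⟩ : Fin n) : ℕ) + 1 : ℤ)
      else (((p.1 ⟨i - 1, by omega⟩ : Fin n) : ℕ) + 1 : ℤ))
  else 0

/-- The number of type B descents: `0 ≤ i ≤ n-1` with `w(i) > w(i+1)`, where `w(0)=0`. -/
noncomputable def desB {n : ℕ} (p : BPerm n) : ℕ :=
  ((Finset.range n).filter (fun i => bval p (i + 1) < bval p i)).card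

/-- The sign character of `B_n`: `sgn_B(u^J) = (-1)^{|J|} sgn(u)`. -/
noncomputable def sgnB {n : ℕ} (p : BPerm n) : ℤ :=
  (Equiv.Perm.sign p.1 : ℤ) * (-1) ^ ((Finset.univ.filter (fun i => p.2 i = true)).card)

open Finset Polynomial

-- basic bval lemmas
lemma bval_of_mem {n : ℕ} (p : BPerm n) (i : ℕ) (h : 1 ≤ i ∧ i ≤ n) :
    bval p i = (if p.2 ⟨i - 1, by omega⟩ then -(((p.1 ⟨i - 1, by omega⟩ : Fin n) : ℕ) + 1 : ℤ)
      else (((p.1 ⟨i - 1, by omega⟩ : Fin n) : ℕ) + 1 : ℤ)) := dif_pos h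

lemma bval_of_not_mem {n : ℕ} (p : BPerm n) (i : ℕ) (h : ¬(1 ≤ i ∧ i ≤ n)) : bval p i = 0 :=
  dif_neg h

lemma bval_bound {n : ℕ} (p : BPerm n) (i : ℕ) : -(n : ℤ) ≤ bval p i ∧ bval p i ≤ (n : ℤ) := by
  by_cases h : 1 ≤ i ∧ i ≤ n
  · rw [bval_of_mem p i h]
    have hv : ((p.1 ⟨i - 1, by omega⟩ : Fin n) : ℕ) < n := (p.1 _).isLt
    split_ifs <;> constructor <;> push_cast <;> omega
  · rw [bval_of_not_mem p i h]; constructor <;> simp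

lemma sgnB_eq_prod {n : ℕ} (p : BPerm n) :
    sgnB p = (Equiv.Perm.sign p.1 : ℤ) * ∏ i, (if p.2 i = true then (-1 : ℤ) else 1) := by
  rw [sgnB, Finset.prod_ite, Finset.prod_const, Finset.prod_const, one_pow, mul_one]

-- Part A : strict bound when the value at position k is not ±(n+1)
lemma bval_lt_of_ne {n : ℕ} (p : BPerm (n + 1)) (k : ℕ)
    (hk : ∀ h : 1 ≤ k ∧ k ≤ n + 1, p.1 ⟨k - 1, by omega⟩ ≠ Fin.last n) :
    -((n : ℤ) + 1) < bval p k ∧ bval p k < (n : ℤ) + 1 := by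
  by_cases h : 1 ≤ k ∧ k ≤ n + 1
  · rw [bval_of_mem p k h]
    have hne := hk h
    have hv : ((p.1 ⟨k - 1, by omega⟩ : Fin (n+1)) : ℕ) < n := by
      have := (p.1 ⟨k - 1, by omega⟩).isLt
      rcases Nat.lt_succ_iff_lt_or_eq.mp this with h' | h'
      · exact h'
      · exact absurd (Fin.ext h') hne
    split_ifs <;> constructor <;> push_cast <;> omega
  · rw [bval_of_not_mem p k h]; constructor <;> push_cast <;> omega

lemma bval_at_last {n : ℕ} (p : BPerm (n + 1)) (k : ℕ) (h : 1 ≤ k ∧ k ≤ n + 1)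
    (hl : p.1 ⟨k - 1, by omega⟩ = Fin.last n) :
    bval p k = if p.2 ⟨k - 1, by omega⟩ = true then -((n : ℤ) + 1) else (n : ℤ) + 1 := by
  rw [bval_of_mem p k h, hl]
  simp [Fin.last]

lemma desB_sum {n : ℕ} (p : BPerm n) :
    desB p = ∑ k ∈ Finset.range n, (if bval p (k + 1) < bval p k then 1 else 0) :=
  Finset.card_filter _ _

lemma desB_eq {n : ℕ} (p : BPerm (n + 1)) {j : Fin (n + 1)} (hj : p.1 j = Fin.last n)
    (hjn : (j : ℕ) < n) :
    desB p = 1 + ∑ k ∈ ((Finset.range (n + 1)).erase (j : ℕ)).erase ((j : ℕ) + 1),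
      (if bval p (k + 1) < bval p k then 1 else 0) := by
  have hmem1 : (j : ℕ) ∈ Finset.range (n + 1) := Finset.mem_range.mpr (by omega)
  have hmem2 : (j : ℕ) + 1 ∈ (Finset.range (n + 1)).erase (j : ℕ) := by
    rw [Finset.mem_erase]; exact ⟨by omega, Finset.mem_range.mpr (by omega)⟩
  rw [desB_sum, ← Finset.add_sum_erase _ _ hmem1, ← Finset.add_sum_erase _ _ hmem2, ← add_assoc]
  congr 1
  -- the two special terms sum to 1
  have hval : bval p ((j : ℕ) + 1)
      = if p.2 j = true then -((n : ℤ) + 1) else (n : ℤ) + 1 := by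
    have h : 1 ≤ (j : ℕ) + 1 ∧ (j : ℕ) + 1 ≤ n + 1 := ⟨by omega, by omega⟩
    have e : (⟨(j : ℕ) + 1 - 1, by omega⟩ : Fin (n + 1)) = j := by
      apply Fin.ext; simp
    rw [bval_at_last p _ h (by rw [e]; exact hj), e]
  have hb1 : -((n : ℤ) + 1) < bval p (j : ℕ) ∧ bval p (j : ℕ) < (n : ℤ) + 1 := by
    apply bval_lt_of_ne
    intro h hc
    have : (⟨(j : ℕ) - 1, by omega⟩ : Fin (n + 1)) = j := p.1.injective (hc.trans hj.symm)
    have := congrArg Fin.val this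
    simp at this; omega
  have hb2 : -((n : ℤ) + 1) < bval p ((j : ℕ) + 2) ∧ bval p ((j : ℕ) + 2) < (n : ℤ) + 1 := by
    apply bval_lt_of_ne
    intro h hc
    have : (⟨(j : ℕ) + 2 - 1, by omega⟩ : Fin (n + 1)) = j := p.1.injective (hc.trans hj.symm)
    have := congrArg Fin.val this
    simp at this
  rw [show (j : ℕ) + 1 + 1 = (j : ℕ) + 2 from rfl, hval]
  by_cases hs : p.2 j = true <;> simp only [hs, if_true, if_false] <;> split_ifs <;> omega

noncomputable def bflip {n : ℕ} (p : BPerm (n + 1)) : BPerm (n + 1) :=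
  (p.1, Function.update p.2 (p.1.symm (Fin.last n)) (!(p.2 (p.1.symm (Fin.last n)))))

lemma bval_flip {n : ℕ} (p : BPerm (n + 1)) (k : ℕ)
    (hk : k ≠ ((p.1.symm (Fin.last n) : Fin (n+1)) : ℕ) + 1) :
    bval (bflip p) k = bval p k := by
  by_cases h : 1 ≤ k ∧ k ≤ n + 1
  · rw [bval_of_mem _ k h, bval_of_mem p k h]
    have hne : (⟨k - 1, by omega⟩ : Fin (n + 1)) ≠ p.1.symm (Fin.last n) := by
      intro hc
      have := congrArg Fin.val hc
      simp at this; omega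
    show (if Function.update p.2 _ _ _ = true then _ else _) = _
    rw [Function.update_of_ne hne]
    rfl
  · rw [bval_of_not_mem _ k h, bval_of_not_mem p k h]

lemma desB_flip {n : ℕ} (p : BPerm (n + 1)) (hp : p.1 (Fin.last n) ≠ Fin.last n) :
    desB (bflip p) = desB p := by
  set j := p.1.symm (Fin.last n) with hjdef
  have hj : p.1 j = Fin.last n := p.1.apply_symm_apply _
  have hjn : (j : ℕ) < n := by
    have h1 : j ≠ Fin.last n := by
      intro hc; rw [hc] at hj; exact hp hj
    have := j.isLt
    rcases Nat.lt_succ_iff_lt_or_eq.mp this with h' | h'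
    · exact h'
    · exact absurd (Fin.ext h') h1
  have hj' : (bflip p).1 (j) = Fin.last n := hj
  rw [desB_eq p hj hjn, desB_eq (bflip p) hj' hjn]
  congr 1
  apply Finset.sum_congr rfl
  intro k hk
  rw [Finset.mem_erase, Finset.mem_erase] at hk
  rw [bval_flip p k (by omega), bval_flip p (k + 1) (by omega)]

lemma sgnB_flip {n : ℕ} (p : BPerm (n + 1)) : sgnB (bflip p) = -sgnB p := by
  rw [sgnB_eq_prod, sgnB_eq_prod]
  set j := p.1.symm (Fin.last n)
  have hfun : (fun i => if (bflip p).2 i = true then (-1 : ℤ) else 1)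
      = Function.update (fun i => if p.2 i = true then (-1 : ℤ) else 1) j
        (if !(p.2 j) then (-1 : ℤ) else 1) := by
    funext i
    by_cases hi : i = j
    · rw [hi]
      show (if Function.update p.2 j (!(p.2 j)) j = true then _ else _) = _
      rw [Function.update_self, Function.update_self]
    · show (if Function.update p.2 j (!(p.2 j)) i = true then _ else _) = _
      rw [Function.update_of_ne hi, Function.update_of_ne hi]
  show (Equiv.Perm.sign p.1 : ℤ) * _ = _
  rw [hfun, Finset.prod_update_of_mem (Finset.mem_univ j),
    ← Finset.mul_prod_erase Finset.univ _ (Finset.mem_univ j)]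
  have hneg : ∀ b : Bool, (if (!b) = true then (-1 : ℤ) else 1) = -(if b = true then (-1 : ℤ) else 1) := by decide
  rw [hneg (p.2 j), Finset.sdiff_singleton_eq_erase]; ring

lemma bflip_flip {n : ℕ} (p : BPerm (n + 1)) : bflip (bflip p) = p := by
  unfold bflip
  simp only [Function.update_self, Bool.not_not, Function.update_idem]
  exact Prod.ext rfl (Function.update_eq_self _ _)

-- Part B : extension
def castEquiv (n : ℕ) : Fin n ≃ {i : Fin (n + 1) // (i : ℕ) < n} where
  toFun j := ⟨j.castSucc, j.isLt⟩
  invFun i := ⟨(i : Fin (n + 1)) , i.2⟩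
  left_inv j := by apply Fin.ext; simp
  right_inv i := by apply Subtype.ext; apply Fin.ext; simp

noncomputable def extPerm {n : ℕ} (u : Equiv.Perm (Fin n)) : Equiv.Perm (Fin (n + 1)) :=
  u.extendDomain (castEquiv n)

lemma extPerm_castSucc {n : ℕ} (u : Equiv.Perm (Fin n)) (j : Fin n) :
    extPerm u j.castSucc = (u j).castSucc :=
  u.extendDomain_apply_image (castEquiv n) j

lemma extPerm_last {n : ℕ} (u : Equiv.Perm (Fin n)) : extPerm u (Fin.last n) = Fin.last n :=
  u.extendDomain_apply_not_subtype (castEquiv n) (by simp [Fin.last])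

lemma sign_extPerm {n : ℕ} (u : Equiv.Perm (Fin n)) :
    Equiv.Perm.sign (extPerm u) = Equiv.Perm.sign u :=
  Equiv.Perm.sign_extendDomain u (castEquiv n)

noncomputable def extB {n : ℕ} (q : BPerm n) (s : Bool) : BPerm (n + 1) :=
  (extPerm q.1, Fin.snoc q.2 s)

lemma extB_fst {n : ℕ} (q : BPerm n) (s : Bool) : (extB q s).1 = extPerm q.1 := rfl
lemma extB_snd {n : ℕ} (q : BPerm n) (s : Bool) : (extB q s).2 = Fin.snoc q.2 s := rfl

lemma bval_extB {n : ℕ} (q : BPerm n) (s : Bool) (k : ℕ) (hk : k ≤ n) :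
    bval (extB q s) k = bval q k := by
  by_cases h : 1 ≤ k ∧ k ≤ n
  · rw [bval_of_mem _ k ⟨h.1, by omega⟩, bval_of_mem q k h]
    have e1 : (⟨k - 1, by omega⟩ : Fin (n + 1)) = (⟨k - 1, by omega⟩ : Fin n).castSucc := by
      apply Fin.ext; simp
    simp only [extB_fst, extB_snd]
    rw [e1, extPerm_castSucc]; simp only [Fin.snoc_castSucc]
    simp
  · rw [bval_of_not_mem _ k (by omega), bval_of_not_mem q k h]

lemma bval_extB_last {n : ℕ} (q : BPerm n) (s : Bool) :
    bval (extB q s) (n + 1) = if s then -((n : ℤ) + 1) else (n : ℤ) + 1 := by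
  rw [bval_of_mem _ (n + 1) ⟨by omega, le_refl _⟩]
  have e1 : (⟨n + 1 - 1, by omega⟩ : Fin (n + 1)) = Fin.last n := by
    apply Fin.ext; simp [Fin.last]
  simp only [extB_fst, extB_snd]
  rw [e1, extPerm_last]; simp only [Fin.snoc_last]
  cases s <;> simp [Fin.last]

lemma desB_extB {n : ℕ} (q : BPerm n) (s : Bool) :
    desB (extB q s) = desB q + (if s then 1 else 0) := by
  rw [desB_sum, desB_sum, Finset.sum_range_succ]
  congr 1
  · apply Finset.sum_congr rfl
    intro k hk
    rw [Finset.mem_range] at hk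
    rw [bval_extB q s k (by omega), bval_extB q s (k + 1) (by omega)]
  · rw [bval_extB q s n (le_refl n), bval_extB_last]
    have := bval_bound q n
    cases s <;> simp <;> omega

lemma sgnB_extB {n : ℕ} (q : BPerm n) (s : Bool) :
    sgnB (extB q s) = (if s then (-1 : ℤ) else 1) * sgnB q := by
  rw [sgnB_eq_prod, sgnB_eq_prod]
  simp only [extB_fst, extB_snd]
  rw [sign_extPerm, Fin.prod_univ_castSucc]
  have h1 : ∀ i : Fin n, (if (Fin.snoc q.2 s : Fin (n+1) → Bool) i.castSucc = true then (-1 : ℤ) else 1)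
      = (if q.2 i = true then (-1 : ℤ) else 1) := by
    intro i; rw [Fin.snoc_castSucc]
  simp only [Fin.snoc_castSucc]
  simp only [Fin.snoc_last]
  cases s <;> simp <;> ring

lemma extB_injective {n : ℕ} (q q' : BPerm n) (s s' : Bool) (h : extB q s = extB q' s') :
    q = q' ∧ s = s' := by
  have h1 : extPerm q.1 = extPerm q'.1 := congrArg Prod.fst h
  have h2 : (Fin.snoc q.2 s : Fin (n+1) → Bool) = Fin.snoc q'.2 s' := congrArg Prod.snd h
  have hs : s = s' := by
    have := congrFun h2 (Fin.last n)
    simpa [Fin.snoc_last] using this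
  have hb : q.2 = q'.2 := by
    funext i
    have := congrFun h2 i.castSucc
    simpa [Fin.snoc_castSucc] using this
  have hp : q.1 = q'.1 := by
    apply Equiv.ext
    intro j
    have h3 : extPerm q.1 j.castSucc = extPerm q'.1 j.castSucc := by rw [h1]
    rw [extPerm_castSucc, extPerm_castSucc] at h3
    exact Fin.castSucc_injective n h3
  exact ⟨Prod.ext hp hb, hs⟩

lemma val_lt_of_fix {n : ℕ} (σ : Equiv.Perm (Fin (n + 1))) (hσ : σ (Fin.last n) = Fin.last n)
    (j : Fin n) : ((σ j.castSucc : Fin (n + 1)) : ℕ) < n := by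
  have hne : σ j.castSucc ≠ Fin.last n := by
    intro hc
    have := σ.injective (hc.trans hσ.symm)
    exact absurd (congrArg Fin.val this) (by simp [Fin.last]; omega)
  have := (σ j.castSucc).isLt
  rcases Nat.lt_succ_iff_lt_or_eq.mp this with h' | h'
  · exact h'
  · exact absurd (Fin.ext h') hne

noncomputable def restrictPerm {n : ℕ} (σ : Equiv.Perm (Fin (n + 1)))
    (hσ : σ (Fin.last n) = Fin.last n) : Equiv.Perm (Fin n) where
  toFun j := ⟨σ j.castSucc, val_lt_of_fix σ hσ j⟩
  invFun j := ⟨σ⁻¹ j.castSucc, val_lt_of_fix σ⁻¹ (by rw [← hσ, Equiv.Perm.inv_def, Equiv.symm_apply_apply]; exact hσ.symm) j⟩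
  left_inv j := by
    apply Fin.ext
    have e : ((⟨σ j.castSucc, val_lt_of_fix σ hσ j⟩ : Fin n).castSucc) = σ j.castSucc := by
      apply Fin.ext; simp
    simp only [e, Equiv.Perm.inv_def, Equiv.symm_apply_apply]
    rfl
  right_inv j := by
    apply Fin.ext
    have e : ((⟨σ⁻¹ j.castSucc, val_lt_of_fix σ⁻¹ (by rw [← hσ, Equiv.Perm.inv_def, Equiv.symm_apply_apply]; exact hσ.symm) j⟩ : Fin n).castSucc)
        = σ⁻¹ j.castSucc := by
      apply Fin.ext; simp
    simp only [e]; simp only [Equiv.Perm.inv_def, Equiv.apply_symm_apply]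
    rfl

lemma extB_surjective {n : ℕ} (p : BPerm (n + 1)) (hp : p.1 (Fin.last n) = Fin.last n) :
    extB ((restrictPerm p.1 hp, fun i => p.2 i.castSucc) : BPerm n) (p.2 (Fin.last n)) = p := by
  apply Prod.ext
  · apply Equiv.ext
    intro i
    simp only [extB_fst]
    induction i using Fin.lastCases with
    | last => rw [extPerm_last, hp]
    | cast j =>
      rw [extPerm_castSucc]
      apply Fin.ext
      show ((restrictPerm p.1 hp j : Fin n) : ℕ) = _
      rfl
  · funext i
    simp only [extB_snd]
    induction i using Fin.lastCases with
    | last => rw [Fin.snoc_last]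
    | cast j => rw [Fin.snoc_castSucc]

theorem main_sum : ∀ n : ℕ, ∑ p : BPerm n, (sgnB p) • (Polynomial.X : Polynomial ℤ) ^ (desB p)
    = (1 - Polynomial.X) ^ n := by
  intro n
  induction n with
  | zero =>
    rw [pow_zero]
    have h1 : ∀ p : BPerm 0, (sgnB p) • (X : Polynomial ℤ) ^ (desB p) = 1 := by
      intro p
      have hs : sgnB p = 1 := by
        rw [sgnB]
        have h0 : p.1 = 1 := Subsingleton.elim _ _
        rw [h0]
        simp
      have hd : desB p = 0 := by rw [desB]; simp
      rw [hs, hd, pow_zero, one_smul]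
    rw [Finset.sum_congr rfl (fun p _ => h1 p), Finset.sum_const]
    have hc : (Finset.univ : Finset (BPerm 0)).card = 1 := by
      simp [Finset.card_univ, Fintype.card_prod, Fintype.card_perm]
    rw [hc, one_smul]
  | succ n ih =>
    have hsplit := Finset.sum_filter_add_sum_filter_not Finset.univ
      (fun p : BPerm (n + 1) => p.1 (Fin.last n) = Fin.last n)
      (fun p => (sgnB p) • (X : Polynomial ℤ) ^ (desB p))
    have hA : ∑ p ∈ Finset.univ.filter
        (fun p : BPerm (n + 1) => ¬ p.1 (Fin.last n) = Fin.last n),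
        (sgnB p) • (X : Polynomial ℤ) ^ (desB p) = 0 := by
      apply Finset.sum_involution (fun p _ => bflip p)
      · intro p hp
        rw [sgnB_flip, desB_flip p (Finset.mem_filter.mp hp).2, neg_smul, add_neg_cancel]
      · intro p hp _ hc
        have := congrFun (congrArg Prod.snd hc) (p.1.symm (Fin.last n))
        simp only [bflip, Function.update_self] at this
        exact (Bool.not_ne_self _) this
      · intro p hp
        exact Finset.mem_filter.mpr ⟨Finset.mem_univ _, (Finset.mem_filter.mp hp).2⟩
      · intro p hp
        exact bflip_flip p
    have hB : ∑ p ∈ Finset.univ.filter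
        (fun p : BPerm (n + 1) => p.1 (Fin.last n) = Fin.last n),
        (sgnB p) • (X : Polynomial ℤ) ^ (desB p)
        = ∑ qs : BPerm n × Bool,
          (sgnB (extB qs.1 qs.2)) • (X : Polynomial ℤ) ^ (desB (extB qs.1 qs.2)) := by
      symm
      apply Finset.sum_bij (fun (qs : BPerm n × Bool) _ => extB qs.1 qs.2)
      · intro qs _
        exact Finset.mem_filter.mpr ⟨Finset.mem_univ _, extPerm_last _⟩
      · intro a ha b hb hab
        obtain ⟨h1, h2⟩ := extB_injective _ _ _ _ hab
        exact Prod.ext h1 h2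
      · intro p hp
        exact ⟨((restrictPerm p.1 (Finset.mem_filter.mp hp).2, fun i => p.2 i.castSucc),
          p.2 (Fin.last n)), Finset.mem_univ _, extB_surjective p _⟩
      · intro qs _
        rfl
    rw [← hsplit, hA, hB, add_zero, Fintype.sum_prod_type]
    have hq : ∀ q : BPerm n, ∑ s : Bool, (sgnB (extB q s)) • (X : Polynomial ℤ) ^ (desB (extB q s))
        = (sgnB q • (X : Polynomial ℤ) ^ (desB q)) * (1 - X) := by
      intro q
      rw [Fintype.sum_bool, sgnB_extB, sgnB_extB, desB_extB, desB_extB]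
      simp only [if_true, if_false, ite_true, ite_false]
      push_cast [zsmul_eq_mul]
      ring
    rw [Finset.sum_congr rfl (fun q _ => hq q), ← Finset.sum_mul, ih, pow_succ]

theorem typeB_signed_eulerian (n : ℕ) (hn : 1 ≤ n) :
    ∑ p : BPerm n, (sgnB p) • (Polynomial.X : Polynomial ℤ) ^ (desB p)
      = (1 - Polynomial.X) ^ n := by
  exact main_sum n
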